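/- In the Block type Lie algebra 𝓑(p,q) with q ≠ 0, the elements L_α := q⁻¹ L_{α,0} for α ∈ ℤ together with k := q⁻² c span a subalgebra satisfying [L_α, L_β] = (β−α) L_{α+β} + δ_{α+β,0} (α³−α)/12 · k and [k, L_α] = 0; i.e., 𝓑(p,q) contains a subalgebra isomorphic to the Virasoro algebra. -/

import Mathlib

/-- The Block type Lie algebra `𝓑(p,q)`: underlying space is
`(ℤ × ℕ →₀ ℂ) × ℂ`, where `L_{α,i} = (single (α,i) 1, 0)` and the central
element `c = (0, 1)`.  The bracket is
`[L_{α,i}, L_{β,j}] = ((i+q)(β+p) − (j+q)(α+p)) L_{α+β,i+j}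
  + δ_{α+β,0} δ_{i,0} δ_{j,0} (α³−α)/12 · c`, with `c` central. -/
noncomputable def BpqBracket (p q : ℂ) (X Y : (ℤ × ℕ →₀ ℂ) × ℂ) : (ℤ × ℕ →₀ ℂ) × ℂ :=
  (X.1.sum fun a x => Y.1.sum fun b y =>
      Finsupp.single (a.1 + b.1, a.2 + b.2)
        (x * y * (((a.2 : ℂ) + q) * ((b.1 : ℂ) + p) - ((b.2 : ℂ) + q) * ((a.1 : ℂ) + p))),
    X.1.sum fun a x => Y.1.sum fun b y =>
      x * y * (if a.1 + b.1 = 0 ∧ a.2 = 0 ∧ b.2 = 0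
        then (((a.1 : ℂ)) ^ 3 - (a.1 : ℂ)) / 12 else 0))

/-- For `q ≠ 0`, the elements `L_α := q⁻¹ L_{α,0}` together with `k := q⁻² c`
span a copy of the Virasoro algebra inside `𝓑(p,q)`:
`[L_α, L_β] = (β−α) L_{α+β} + δ_{α+β,0} (α³−α)/12 · k` and `[k, L_α] = 0`. -/
theorem stmt6 (p q : ℂ) (hp : p ≠ 0) (hq : q ≠ 0) :
    (∀ α β : ℤ,
      BpqBracket p q (Finsupp.single (α, 0) q⁻¹, 0) (Finsupp.single (β, 0) q⁻¹, 0)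
        = ((β : ℂ) - (α : ℂ)) • ((Finsupp.single (α + β, 0) q⁻¹ : ℤ × ℕ →₀ ℂ), (0 : ℂ))
          + (if α + β = 0 then (((α : ℂ)) ^ 3 - (α : ℂ)) / 12 else 0)
            • ((0 : ℤ × ℕ →₀ ℂ), (q ^ 2)⁻¹)) ∧
    (∀ α : ℤ,
      BpqBracket p q ((0 : ℤ × ℕ →₀ ℂ), (q ^ 2)⁻¹) (Finsupp.single (α, 0) q⁻¹, 0) = 0) := by
  constructor
  · intro α β
    simp only [BpqBracket, Finsupp.sum_single_index, Finsupp.single_zero, Finsupp.sum_zero_index,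
      mul_zero, zero_mul, Prod.mk.injEq, Prod.smul_mk, Prod.mk_add_mk, smul_zero, smul_eq_mul,
      add_zero, zero_add, mul_zero, Nat.cast_zero, smul_zero, and_true, true_and]
    constructor
    · rw [Finsupp.smul_single]
      congr 1
      field_simp
      simp [mul_inv_cancel_right₀ hq]
      rw [mul_comm _ q⁻¹, mul_inv_cancel_left₀ hq]
    · split_ifs with h
      · field_simp
      · simp
  · intro α
    simp [BpqBracket]
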